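/- Let F be a field of characteristic zero. For every n ≥ 1, the n functions from D × (F·e₁₂) to UT₂ given by (y, z) ↦ y^i·z·y^{n−1−i} for i = 0, 1, …, n−1 are linearly independent over F. -/

import Mathlib

noncomputable section

/-- The algebra of `2 × 2` matrices over `F` (ambient algebra for `UT₂`). -/
abbrev M2 (F : Type*) [Field F] := Matrix (Fin 2) (Fin 2) F

/-- The matrix unit `e₁₁`. -/
def e11 (F : Type*) [Field F] : M2 F := Matrix.single 0 0 1

/-- The matrix unit `e₁₂`. -/
def e12 (F : Type*) [Field F] : M2 F := Matrix.single 0 1 1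

/-- The matrix unit `e₂₂`. -/
def e22 (F : Type*) [Field F] : M2 F := Matrix.single 1 1 1

/-- `D = F e₁₁ ⊕ F e₂₂`, the even component of the canonical `ℤ₂`-grading of `UT₂`. -/
def Dsub (F : Type*) [Field F] : Submodule F (M2 F) := Submodule.span F {e11 F, e22 F}

/-- `F e₁₂`, the odd component of the canonical `ℤ₂`-grading of `UT₂`. -/
def oddSub (F : Type*) [Field F] : Submodule F (M2 F) := Submodule.span F {e12 F}

/-- For every `n ≥ 1`, the `n` functions `D × (F e₁₂) → UT₂` given by
`(y, z) ↦ yⁱ z y^{n-1-i}` for `i = 0, 1, …, n-1`, are linearly independent over `F`. -/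
theorem stmt17 (F : Type*) [Field F] [CharZero F] (n : ℕ) (hn : 1 ≤ n) :
    LinearIndependent F
      (fun i : Fin n => fun p : ↥(Dsub F) × ↥(oddSub F) =>
        ((p.1 : M2 F)) ^ (i : ℕ) * ((p.2 : M2 F)) * ((p.1 : M2 F)) ^ (n - 1 - (i : ℕ))) := by
  rw [Fintype.linearIndependent_iff]
  intro c hc
  have key : ∀ a : F, ∑ i : Fin n, c i * a ^ (i : ℕ) = 0 := by
    intro a
    have hy : (Matrix.diagonal ![a, 1] : M2 F) ∈ Dsub F := by
      have hdiag : (Matrix.diagonal ![a, 1] : M2 F) = a • e11 F + e22 F := by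
        ext i j
        fin_cases i <;> fin_cases j <;>
          simp [e11, e22, Matrix.single, Matrix.diagonal]
      rw [hdiag]
      exact Submodule.add_mem _
        (Submodule.smul_mem _ _ (Submodule.subset_span (by simp)))
        (Submodule.subset_span (by simp))
    have hz : e12 F ∈ oddSub F := Submodule.subset_span (by simp)
    have h := congrFun hc (⟨_, hy⟩, ⟨_, hz⟩)
    simp only [Finset.sum_apply, Pi.smul_apply, Pi.zero_apply] at h
    have h01 := congrArg (fun M : M2 F => M 0 1) h
    simp only [Matrix.sum_apply, Matrix.smul_apply, Matrix.zero_apply,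
      Matrix.diagonal_pow, Matrix.diagonal_mul, Matrix.mul_diagonal,
      e12, Matrix.single, Pi.pow_apply] at h01
    simpa using h01
  have hp : (∑ i : Fin n, Polynomial.C (c i) * Polynomial.X ^ (i : ℕ) : Polynomial F) = 0 := by
    apply Polynomial.funext
    intro a
    simp only [Polynomial.eval_finset_sum, Polynomial.eval_mul, Polynomial.eval_C,
      Polynomial.eval_pow, Polynomial.eval_X, Polynomial.eval_zero]
    exact key a
  intro j
  have := congrArg (fun p : Polynomial F => p.coeff (j : ℕ)) hp
  simp only [Polynomial.finset_sum_coeff, Polynomial.coeff_C_mul,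
    Polynomial.coeff_X_pow, Polynomial.coeff_zero, mul_ite, mul_one, mul_zero] at this
  simp only [Fin.val_eq_val, Finset.sum_ite_eq, Finset.mem_univ, if_true] at this
  exact this
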